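/- Let K ≥ 1 be an integer and v : {0,…,K+1} → ℕ with v(k) ≥ 1 for all k. Define α_k := v(k)·v(k+1)/(v(k)+v(k+1)−1) and β_k := min(v(k), v(k+1)) for k ∈ {0,…,K}, and α := (Σ_{k=0}^{K} α_k^{−1})^{−1}, β := (Σ_{k=0}^{K} β_k^{−1})^{−1}. Let L := {k ∈ {0,…,K} : min(v(k), v(k+1)) > 1} be nonempty. Then (β − α)/α = β·(α^{−1} − β^{−1}) and (β − α)/α ≤ |L| / ((v(1)^{−1} + v(K+1)^{−1}) · min_{k∈L} v(k)). -/

import Mathlib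

lemma aux_id (a b : ℕ) (ha : 1 ≤ a) (hb : 1 ≤ b) :
    (((a:ℝ) * (b:ℝ)) / ((a:ℝ) + (b:ℝ) - 1))⁻¹ - ((min a b : ℕ) : ℝ)⁻¹
      = (((min a b : ℕ) : ℝ) - 1) / ((a:ℝ) * (b:ℝ)) := by
  have ha' : (1:ℝ) ≤ (a:ℝ) := by exact_mod_cast ha
  have hb' : (1:ℝ) ≤ (b:ℝ) := by exact_mod_cast hb
  have h1 : (a:ℝ) ≠ 0 := by linarith
  have h2 : (b:ℝ) ≠ 0 := by linarith
  have h3 : (a:ℝ) + (b:ℝ) - 1 ≠ 0 := by linarith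
  rcases le_total a b with h | h
  · rw [min_eq_left h]; field_simp; ring
  · rw [min_eq_right h]; field_simp; ring

theorem fractional_gap (K : ℕ) (hK : 1 ≤ K) (v : ℕ → ℕ) (hv : ∀ k ≤ K + 1, 1 ≤ v k)
    (α β : ℝ)
    (hα : α = (∑ k ∈ Finset.range (K + 1),
      (((v k : ℝ) * (v (k + 1) : ℝ)) / ((v k : ℝ) + (v (k + 1) : ℝ) - 1))⁻¹)⁻¹)
    (hβ : β = (∑ k ∈ Finset.range (K + 1), ((min (v k) (v (k + 1)) : ℕ) : ℝ)⁻¹)⁻¹)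
    (L : Finset ℕ)
    (hL : L = (Finset.range (K + 1)).filter (fun k => 1 < min (v k) (v (k + 1))))
    (hne : L.Nonempty) :
    (β - α) / α = β * (α⁻¹ - β⁻¹) ∧
    (β - α) / α ≤ (L.card : ℝ) /
      ((((v 1 : ℝ))⁻¹ + ((v (K + 1) : ℝ))⁻¹) * ((L.inf' hne v : ℕ) : ℝ)) := by
  -- basic facts for each k in range
  have hv1 : ∀ k ∈ Finset.range (K + 1), 1 ≤ v k := by
    intro k hk
    have := Finset.mem_range.mp hk
    exact hv k (by omega)
  have hv2 : ∀ k ∈ Finset.range (K + 1), 1 ≤ v (k + 1) := by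
    intro k hk
    have := Finset.mem_range.mp hk
    exact hv (k + 1) (by omega)
  set S := ∑ k ∈ Finset.range (K + 1),
      (((v k : ℝ) * (v (k + 1) : ℝ)) / ((v k : ℝ) + (v (k + 1) : ℝ) - 1))⁻¹ with hSdef
  set T := ∑ k ∈ Finset.range (K + 1), ((min (v k) (v (k + 1)) : ℕ) : ℝ)⁻¹ with hTdef
  have hrange_ne : (Finset.range (K + 1)).Nonempty := ⟨0, by simp⟩
  have hSpos : 0 < S := by
    apply Finset.sum_pos _ hrange_ne
    intro k hk
    have ha : (1:ℝ) ≤ (v k : ℝ) := by exact_mod_cast hv1 k hk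
    have hb : (1:ℝ) ≤ (v (k+1) : ℝ) := by exact_mod_cast hv2 k hk
    have : 0 < ((v k : ℝ) * (v (k + 1) : ℝ)) / ((v k : ℝ) + (v (k + 1) : ℝ) - 1) := by
      apply div_pos <;> nlinarith
    positivity
  have hTpos : 0 < T := by
    apply Finset.sum_pos _ hrange_ne
    intro k hk
    have ha : 1 ≤ min (v k) (v (k+1)) := le_min (hv1 k hk) (hv2 k hk)
    have : (0:ℝ) < ((min (v k) (v (k+1)) : ℕ) : ℝ) := by exact_mod_cast ha
    positivity
  have hαpos : 0 < α := by rw [hα]; positivity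
  have hβpos : 0 < β := by rw [hβ]; positivity
  have hαinv : α⁻¹ = S := by rw [hα, inv_inv]
  have hβinv : β⁻¹ = T := by rw [hβ, inv_inv]
  have part1 : (β - α) / α = β * (α⁻¹ - β⁻¹) := by
    field_simp
  refine ⟨part1, ?_⟩
  rw [part1, hαinv, hβinv, hβ]
  -- notation
  set c : ℕ := L.inf' hne v with hcdef
  have hLsub : L ⊆ Finset.range (K + 1) := by
    rw [hL]; exact Finset.filter_subset _ _
  have hcpos : 1 ≤ c := by
    apply Finset.le_inf'
    intro k hk
    exact hv1 k (hLsub hk)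
  have hcR : (0:ℝ) < (c:ℝ) := by exact_mod_cast hcpos
  -- S - T = sum over L of (m-1)/(ab)
  have hST : S - T = ∑ k ∈ Finset.range (K + 1),
      ((((min (v k) (v (k+1))) : ℕ) : ℝ) - 1) / ((v k : ℝ) * (v (k+1) : ℝ)) := by
    rw [hSdef, hTdef, ← Finset.sum_sub_distrib]
    apply Finset.sum_congr rfl
    intro k hk
    exact aux_id (v k) (v (k+1)) (hv1 k hk) (hv2 k hk)
  have hsum_filter : S - T = ∑ k ∈ L,
      ((((min (v k) (v (k+1))) : ℕ) : ℝ) - 1) / ((v k : ℝ) * (v (k+1) : ℝ)) := by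
    rw [hST, hL]
    symm
    apply Finset.sum_filter_of_ne
    intro k hk hne0
    by_contra hc
    push_neg at hc
    have hm : min (v k) (v (k+1)) = 1 := le_antisymm hc (le_min (hv1 k hk) (hv2 k hk))
    apply hne0
    rw [hm]
    norm_num
  -- bound each term by 1/c
  have hterm : ∀ k ∈ L,
      ((((min (v k) (v (k+1))) : ℕ) : ℝ) - 1) / ((v k : ℝ) * (v (k+1) : ℝ)) ≤ (c:ℝ)⁻¹ := by
    intro k hk
    have hk' := hLsub hk
    have ha : (1:ℝ) ≤ (v k : ℝ) := by exact_mod_cast hv1 k hk'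
    have hb : (1:ℝ) ≤ (v (k+1) : ℝ) := by exact_mod_cast hv2 k hk'
    have hmb : ((min (v k) (v (k+1)) : ℕ) : ℝ) ≤ (v (k+1) : ℝ) := by
      exact_mod_cast min_le_right _ _
    have hca : (c:ℝ) ≤ (v k : ℝ) := by
      exact_mod_cast Finset.inf'_le v hk
    have step1 : ((((min (v k) (v (k+1))) : ℕ) : ℝ) - 1) / ((v k : ℝ) * (v (k+1) : ℝ))
        ≤ ((v k : ℝ))⁻¹ := by
      rw [inv_eq_one_div, div_le_div_iff₀ (by nlinarith) (by linarith)]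
      nlinarith
    calc _ ≤ ((v k : ℝ))⁻¹ := step1
      _ ≤ (c:ℝ)⁻¹ := by
          apply inv_anti₀ hcR hca
  have hSTle : S - T ≤ (L.card : ℝ) * (c:ℝ)⁻¹ := by
    rw [hsum_filter]
    calc _ ≤ ∑ k ∈ L, (c:ℝ)⁻¹ := Finset.sum_le_sum hterm
      _ = (L.card : ℝ) * (c:ℝ)⁻¹ := by rw [Finset.sum_const, nsmul_eq_mul]
  have hSTnonneg : 0 ≤ S - T := by
    rw [hsum_filter]
    apply Finset.sum_nonneg
    intro k hk
    have hk' := hLsub hk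
    have ha : (1:ℝ) ≤ (v k : ℝ) := by exact_mod_cast hv1 k hk'
    have hb : (1:ℝ) ≤ (v (k+1) : ℝ) := by exact_mod_cast hv2 k hk'
    have hm : (1:ℝ) ≤ ((min (v k) (v (k+1)) : ℕ) : ℝ) := by
      exact_mod_cast le_min (hv1 k hk') (hv2 k hk')
    apply div_nonneg (by linarith) (by nlinarith)
  -- T ≥ 1/v1 + 1/v(K+1)
  set D : ℝ := ((v 1 : ℝ))⁻¹ + ((v (K + 1) : ℝ))⁻¹ with hDdef
  have hv1R : (0:ℝ) < (v 1 : ℝ) := by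
    have := hv 1 (by omega); exact_mod_cast Nat.lt_of_lt_of_le Nat.zero_lt_one this
  have hvK1R : (0:ℝ) < (v (K+1) : ℝ) := by
    have := hv (K+1) (le_refl _); exact_mod_cast Nat.lt_of_lt_of_le Nat.zero_lt_one this
  have hDpos : 0 < D := by rw [hDdef]; positivity
  have hTD : D ≤ T := by
    have hsub : ({0, K} : Finset ℕ) ⊆ Finset.range (K + 1) := by
      intro x hx
      simp only [Finset.mem_insert, Finset.mem_singleton] at hx
      rcases hx with rfl | rfl <;> simp [Finset.mem_range] <;> omega
    have h0K : (0:ℕ) ≠ K := by omega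
    have hpair : ∑ k ∈ ({0, K} : Finset ℕ), ((min (v k) (v (k + 1)) : ℕ) : ℝ)⁻¹
        = ((min (v 0) (v 1) : ℕ) : ℝ)⁻¹ + ((min (v K) (v (K+1)) : ℕ) : ℝ)⁻¹ := by
      rw [Finset.sum_pair h0K]
    have hle : ∑ k ∈ ({0, K} : Finset ℕ), ((min (v k) (v (k + 1)) : ℕ) : ℝ)⁻¹ ≤ T := by
      apply Finset.sum_le_sum_of_subset_of_nonneg hsub
      intro k hk _
      have hm : 1 ≤ min (v k) (v (k+1)) := le_min (hv1 k hk) (hv2 k hk)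
      have : (0:ℝ) < ((min (v k) (v (k+1)) : ℕ) : ℝ) := by exact_mod_cast hm
      positivity
    have h1 : ((v 1 : ℝ))⁻¹ ≤ ((min (v 0) (v 1) : ℕ) : ℝ)⁻¹ := by
      have hm : 1 ≤ min (v 0) (v 1) := le_min (hv 0 (by omega)) (hv 1 (by omega))
      have hmR : (0:ℝ) < ((min (v 0) (v 1) : ℕ) : ℝ) := by exact_mod_cast hm
      apply inv_anti₀ hmR
      exact_mod_cast min_le_right _ _
    have h2 : ((v (K+1) : ℝ))⁻¹ ≤ ((min (v K) (v (K+1)) : ℕ) : ℝ)⁻¹ := by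
      have hm : 1 ≤ min (v K) (v (K+1)) := le_min (hv K (by omega)) (hv (K+1) (le_refl _))
      have hmR : (0:ℝ) < ((min (v K) (v (K+1)) : ℕ) : ℝ) := by exact_mod_cast hm
      apply inv_anti₀ hmR
      exact_mod_cast min_le_right _ _
    rw [hDdef]
    calc ((v 1 : ℝ))⁻¹ + ((v (K + 1) : ℝ))⁻¹
        ≤ ((min (v 0) (v 1) : ℕ) : ℝ)⁻¹ + ((min (v K) (v (K+1)) : ℕ) : ℝ)⁻¹ := by
          exact add_le_add h1 h2
      _ = _ := hpair.symm
      _ ≤ T := hle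
  -- conclude
  have hTinv : T⁻¹ ≤ D⁻¹ := inv_anti₀ hDpos hTD
  calc T⁻¹ * (S - T) ≤ D⁻¹ * ((L.card : ℝ) * (c:ℝ)⁻¹) := by
        apply mul_le_mul hTinv hSTle hSTnonneg (by positivity)
    _ = (L.card : ℝ) / (D * (c:ℝ)) := by
        field_simp
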